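/- For every real number c in the open interval (1/4, 3/4), the denominators do not vanish (112c − 6 ≠ 0 and 106 − 112c ≠ 0), and (−30c + 12)/(112c − 6) + (30c − 18)/(106 − 112c) = 0 if and only if c = 1/2 + (1/4)√(5/7) or c = 1/2 − (1/4)√(5/7). -/
import Mathlib


/-- For every c ∈ (1/4, 3/4) the denominators 112c − 6 and 106 − 112c do not vanish, and
(−30c + 12)/(112c − 6) + (30c − 18)/(106 − 112c) = 0 iff
c = 1/2 + (1/4)√(5/7) or c = 1/2 − (1/4)√(5/7). -/
theorem stmt_8 (c : ℝ) (hc : c ∈ Set.Ioo (1/4 : ℝ) (3/4)) :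
    112 * c - 6 ≠ 0 ∧ 106 - 112 * c ≠ 0 ∧
    ((-30 * c + 12) / (112 * c - 6) + (30 * c - 18) / (106 - 112 * c) = 0 ↔
      c = 1/2 + (1/4) * Real.sqrt (5/7) ∨ c = 1/2 - (1/4) * Real.sqrt (5/7)) := by
  obtain ⟨h1, h2⟩ := hc
  have hd1 : 112 * c - 6 ≠ 0 := by nlinarith
  have hd2 : 106 - 112 * c ≠ 0 := by nlinarith
  refine ⟨hd1, hd2, ?_⟩
  have hs : Real.sqrt (5/7) ^ 2 = 5/7 := Real.sq_sqrt (by norm_num)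
  rw [div_add_div _ _ hd1 hd2, div_eq_zero_iff]
  constructor
  · rintro (h | h)
    · have key : (c - (1/2 + 1/4 * Real.sqrt (5/7))) *
          (c - (1/2 - 1/4 * Real.sqrt (5/7))) = 0 := by nlinarith [hs]
      rcases mul_eq_zero.1 key with h' | h'
      · left; linarith
      · right; linarith
    · exact absurd h (mul_ne_zero hd1 hd2)
  · rintro (rfl | rfl) <;> left <;> nlinarith [hs]
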